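/- Let M be a length-one ℤ[t]-module of exponent 2ⁿ. Then the double-duality (evaluation) map D : M → (M^∧)^∧, defined by D(x)(φ) = φ(x), is an isomorphism of ℤ[t]-modules. -/

import Mathlib

noncomputable instance : Algebra (Polynomial ℤ) (Polynomial ℚ) :=
  (Polynomial.mapRingHom (Int.castRingHom ℚ)).toAlgebra

/-- The `ℤ[t]`-module `ℚ[t]/ℤ[t]`. -/
noncomputable abbrev QtZt : Type :=
  Polynomial ℚ ⧸ LinearMap.range (Algebra.linearMap (Polynomial ℤ) (Polynomial ℚ))

/-- An `R`-module `M` has *length one* if there is a short exact sequence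
`0 → F₁ → F₀ → M → 0` with `F₀`, `F₁` finitely generated free `R`-modules. -/
def IsLengthOne (R M : Type*) [CommRing R] [AddCommGroup M] [Module R M] : Prop :=
  ∃ (k l : ℕ) (f : (Fin k → R) →ₗ[R] (Fin l → R)) (g : (Fin l → R) →ₗ[R] M),
    Function.Injective f ∧ Function.Surjective g ∧ LinearMap.range f = LinearMap.ker g

open Polynomial

lemma algMap_eq :
    (algebraMap (Polynomial ℤ) (Polynomial ℚ)) = mapRingHom (Int.castRingHom ℚ) := rfl

lemma map_two_pow (n : ℕ) :
    map (Int.castRingHom ℚ) ((2 : Polynomial ℤ) ^ n) = (2 : Polynomial ℚ) ^ n := by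
  rw [Polynomial.map_pow]
  norm_num

lemma two_pow_smul_Q (n : ℕ) (w : Polynomial ℚ) :
    (1 / 2 ^ n : ℚ) • ((2 : Polynomial ℚ) ^ n * w) = w := by
  have h2 : (C (2 : ℚ)) = 2 := map_ofNat C 2
  rw [show (2 : Polynomial ℚ) ^ n = C ((2 : ℚ) ^ n) by rw [map_pow, h2], ← smul_eq_C_mul,
    smul_smul]
  norm_num

noncomputable def eps (n : ℕ) : Polynomial ℤ →ₗ[Polynomial ℤ] QtZt where
  toFun p := Submodule.Quotient.mk ((1 / 2 ^ n : ℚ) • p.map (Int.castRingHom ℚ))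
  map_add' p q := by
    rw [Polynomial.map_add, smul_add, Submodule.Quotient.mk_add]
  map_smul' r p := by
    rw [RingHom.id_apply, smul_eq_mul, Polynomial.map_mul, ← Submodule.Quotient.mk_smul,
      @Algebra.smul_def (Polynomial ℤ) (Polynomial ℚ) _ _ _ r, algMap_eq, coe_mapRingHom,
      mul_smul_comm]

lemma eps_two_pow (n : ℕ) (p : Polynomial ℤ) : eps n ((2 : Polynomial ℤ) ^ n * p) = 0 := by
  show Submodule.Quotient.mk _ = 0
  rw [Submodule.Quotient.mk_eq_zero]
  refine ⟨p, ?_⟩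
  show algebraMap (Polynomial ℤ) (Polynomial ℚ) p = _
  rw [algMap_eq, coe_mapRingHom, Polynomial.map_mul, map_two_pow, two_pow_smul_Q]

lemma eps_eq_zero (n : ℕ) (p : Polynomial ℤ) (h : eps n p = 0) :
    ∃ u, p = 2 ^ n * u := by
  have h' : ((1 / 2 ^ n : ℚ) • p.map (Int.castRingHom ℚ)) ∈
      LinearMap.range (Algebra.linearMap (Polynomial ℤ) (Polynomial ℚ)) := by
    rwa [← Submodule.Quotient.mk_eq_zero]
  obtain ⟨u, hu⟩ := h'
  refine ⟨u, Polynomial.map_injective (Int.castRingHom ℚ) Int.cast_injective ?_⟩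
  have h1 : map (Int.castRingHom ℚ) u = (1 / 2 ^ n : ℚ) • p.map (Int.castRingHom ℚ) := hu
  rw [Polynomial.map_mul, map_two_pow, h1, mul_smul_comm, two_pow_smul_Q]

lemma exists_eps (n : ℕ) (z : QtZt) (hz : (2 : Polynomial ℤ) ^ n • z = 0) :
    ∃ p, eps n p = z := by
  obtain ⟨w, rfl⟩ := Submodule.Quotient.mk_surjective _ z
  rw [← Submodule.Quotient.mk_smul, Submodule.Quotient.mk_eq_zero] at hz
  obtain ⟨v, hv⟩ := hz
  refine ⟨v, ?_⟩
  show Submodule.Quotient.mk _ = Submodule.Quotient.mk w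
  congr 1
  have h1 : map (Int.castRingHom ℚ) v = (2 : Polynomial ℤ) ^ n • w := hv
  rw [h1, @Algebra.smul_def (Polynomial ℤ) (Polynomial ℚ) _ _ _ ((2 : Polynomial ℤ) ^ n) w,
    algMap_eq, coe_mapRingHom, map_two_pow, two_pow_smul_Q]

/-- Let `M` be a length-one `ℤ[t]`-module of exponent `2ⁿ`.  Then the double-duality
(evaluation) map `D : M → (M^∧)^∧`, `D(x)(φ) = φ(x)`, where `M^∧ = Hom(M, ℚ[t]/ℤ[t])`,
is an isomorphism of `ℤ[t]`-modules. -/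
theorem double_duality_bijective
    (M : Type) [AddCommGroup M] [Module (Polynomial ℤ) M]
    (n : ℕ) (hM : IsLengthOne (Polynomial ℤ) M)
    (hexp : ∀ x : M, (2 : Polynomial ℤ) ^ n • x = 0) :
    ∃ D : M →ₗ[Polynomial ℤ]
        ((M →ₗ[Polynomial ℤ] QtZt) →ₗ[Polynomial ℤ] QtZt),
      (∀ (x : M) (φ : M →ₗ[Polynomial ℤ] QtZt), D x φ = φ x) ∧
      Function.Bijective D := by
  classical
  obtain ⟨k, l, f, g, hf, hg, hfg⟩ := hM
  have h2n : (2 : Polynomial ℤ) ^ n ≠ 0 := pow_ne_zero _ two_ne_zero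
  -- the "division by 2^n" map q
  have hmem : ∀ y : Fin l → Polynomial ℤ, (2 : Polynomial ℤ) ^ n • y ∈ LinearMap.range f := by
    intro y
    rw [hfg, LinearMap.mem_ker, map_smul, hexp]
  let e := LinearEquiv.ofInjective f hf
  let q : (Fin l → Polynomial ℤ) →ₗ[Polynomial ℤ] (Fin k → Polynomial ℤ) :=
    e.symm.toLinearMap ∘ₗ
      LinearMap.codRestrict (LinearMap.range f) ((2 : Polynomial ℤ) ^ n • LinearMap.id) hmem
  have hfq : ∀ y, f (q y) = (2 : Polynomial ℤ) ^ n • y := by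
    intro y
    have h1 : ∀ z : LinearMap.range f, f (e.symm z) = (z : Fin l → Polynomial ℤ) := by
      intro z
      conv_rhs => rw [← e.apply_symm_apply z]
      rw [LinearEquiv.ofInjective_apply]
    exact h1 _
  have hqf : ∀ z, q (f z) = (2 : Polynomial ℤ) ^ n • z := by
    intro z
    apply hf
    rw [hfq, map_smul]
  -- descent of maps along g
  let eq := g.quotKerEquivOfSurjective hg
  have heq : ∀ y, eq (Submodule.Quotient.mk y) = g y := by
    intro y
    simp [eq, LinearMap.quotKerEquivOfSurjective, LinearMap.quotKerEquivRange_apply_mk]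
  have heqs : ∀ y, eq.symm (g y) = Submodule.Quotient.mk y := by
    intro y
    rw [LinearEquiv.symm_apply_eq, heq]
  have hker : ∀ ψ : (Fin k → Polynomial ℤ) →ₗ[Polynomial ℤ] Polynomial ℤ,
      LinearMap.ker g ≤ LinearMap.ker ((eps n) ∘ₗ (ψ ∘ₗ q)) := by
    intro ψ y hy
    rw [← hfg] at hy
    obtain ⟨z, rfl⟩ := hy
    rw [LinearMap.mem_ker, LinearMap.comp_apply, LinearMap.comp_apply, hqf, map_smul,
      smul_eq_mul, eps_two_pow]
  let j : ((Fin k → Polynomial ℤ) →ₗ[Polynomial ℤ] Polynomial ℤ) →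
      (M →ₗ[Polynomial ℤ] QtZt) := fun ψ =>
    (Submodule.liftQ (LinearMap.ker g) ((eps n) ∘ₗ (ψ ∘ₗ q)) (hker ψ)) ∘ₗ eq.symm.toLinearMap
  have hj : ∀ ψ y, j ψ (g y) = eps n (ψ (q y)) := by
    intro ψ y
    show (Submodule.liftQ (LinearMap.ker g) ((eps n) ∘ₗ (ψ ∘ₗ q)) (hker ψ)) (eq.symm (g y)) = _
    rw [heqs, Submodule.liftQ_apply]
    rfl
  -- torsion of QtZt-valued homs
  have htor : ∀ (φ : M →ₗ[Polynomial ℤ] QtZt) (x : M), (2 : Polynomial ℤ) ^ n • φ x = 0 := by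
    intro φ x
    rw [← map_smul, hexp, map_zero]
  -- surjectivity of j
  have jsurj : ∀ φ : M →ₗ[Polynomial ℤ] QtZt, ∃ ψ, φ = j ψ := by
    intro φ
    have hex : ∀ i : Fin l, ∃ p, eps n p = φ (g (fun j' => if i = j' then 1 else 0)) :=
      fun i => exists_eps n _ (htor φ _)
    choose c0 hc0 using hex
    let cmap : (Fin l → Polynomial ℤ) →ₗ[Polynomial ℤ] Polynomial ℤ :=
      ∑ i, c0 i • LinearMap.proj i
    have hcmap : ∀ y, cmap y = ∑ i, c0 i * y i := by
      intro y
      simp [cmap, LinearMap.sum_apply, smul_eq_mul]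
    have hc : ∀ y, eps n (cmap y) = φ (g y) := by
      intro y
      rw [show φ (g y) = (φ ∘ₗ g) y from rfl, LinearMap.pi_apply_eq_sum_univ (φ ∘ₗ g) y,
        hcmap, map_sum]
      refine Finset.sum_congr rfl fun i _ => ?_
      rw [show c0 i * y i = y i • c0 i by rw [smul_eq_mul, mul_comm], map_smul, hc0]
      rfl
    have hdiv : ∀ z : Fin k → Polynomial ℤ, ∃ u, cmap (f z) = 2 ^ n * u := by
      intro z
      apply eps_eq_zero
      rw [hc]
      have : f z ∈ LinearMap.ker g := by rw [← hfg]; exact ⟨z, rfl⟩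
      rw [LinearMap.mem_ker] at this
      rw [this, map_zero]
    choose d0 hd0 using hdiv
    have hcan : ∀ u v : Polynomial ℤ, 2 ^ n * u = 2 ^ n * v → u = v := by
      intro u v h
      exact mul_left_cancel₀ h2n h
    let d : (Fin k → Polynomial ℤ) →ₗ[Polynomial ℤ] Polynomial ℤ :=
      { toFun := d0
        map_add' := by
          intro z z'
          apply hcan
          rw [mul_add, ← hd0, ← hd0, ← hd0, map_add, map_add]
        map_smul' := by
          intro r z
          rw [RingHom.id_apply]
          apply hcan
          rw [← hd0, map_smul, map_smul, smul_eq_mul, smul_eq_mul, hd0, mul_left_comm] }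
    refine ⟨d, ?_⟩
    apply LinearMap.ext
    intro x
    obtain ⟨y, rfl⟩ := hg x
    rw [hj, ← hc]
    congr 1
    apply hcan
    show (2:Polynomial ℤ) ^ n * cmap y = 2 ^ n * d0 (q y)
    rw [← hd0, hfq, map_smul, smul_eq_mul]
  -- the evaluation map
  refine ⟨LinearMap.id.flip, fun x φ => rfl, ?_, ?_⟩
  · -- injectivity
    have key : ∀ x : M, (∀ φ : M →ₗ[Polynomial ℤ] QtZt, φ x = 0) → x = 0 := by
      intro x hx
      obtain ⟨y, rfl⟩ := hg x
      have h1 : ∀ i : Fin k, ∃ u, q y i = 2 ^ n * u := by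
        intro i
        apply eps_eq_zero
        have := hx (j (LinearMap.proj i))
        rw [hj] at this
        exact this
      choose z hz using h1
      have h2 : q y = (2 : Polynomial ℤ) ^ n • z := by
        funext i
        rw [Pi.smul_apply, smul_eq_mul]
        exact hz i
      have h3 : (2 : Polynomial ℤ) ^ n • y = (2 : Polynomial ℤ) ^ n • f z := by
        rw [← hfq, h2, map_smul]
      have h4 : y = f z := smul_right_injective _ h2n h3
      rw [h4, ← LinearMap.mem_ker, ← hfg]
      exact ⟨z, rfl⟩
    intro x₁ x₂ h
    have hsub : ∀ φ : M →ₗ[Polynomial ℤ] QtZt, φ (x₁ - x₂) = 0 := by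
      intro φ
      have hφ : φ x₁ = φ x₂ := LinearMap.congr_fun h φ
      rw [map_sub, hφ, sub_self]
    have := key _ hsub
    rwa [sub_eq_zero] at this
  · -- surjectivity
    intro Φ
    have hjtor : ∀ ψ, (2 : Polynomial ℤ) ^ n • j ψ = 0 := by
      intro ψ
      apply LinearMap.ext
      intro x
      rw [LinearMap.smul_apply, htor, LinearMap.zero_apply]
    have hex : ∀ i : Fin k, ∃ p, eps n p = Φ (j (LinearMap.proj i)) := by
      intro i
      apply exists_eps
      rw [← map_smul, hjtor, map_zero]
    choose a ha using hex
    -- key identity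
    have hjdec : ∀ ψ : (Fin k → Polynomial ℤ) →ₗ[Polynomial ℤ] Polynomial ℤ,
        j ψ = ∑ i, ψ (fun j' => if i = j' then 1 else 0) • j (LinearMap.proj i) := by
      intro ψ
      apply LinearMap.ext
      intro x
      obtain ⟨y, rfl⟩ := hg x
      rw [LinearMap.sum_apply, hj, LinearMap.pi_apply_eq_sum_univ ψ (q y), map_sum]
      refine Finset.sum_congr rfl fun i _ => ?_
      rw [LinearMap.smul_apply, hj, LinearMap.proj_apply, smul_eq_mul]
      rw [show (ψ fun j' => if i = j' then 1 else 0) • eps n (q y i)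
            = eps n ((ψ fun j' => if i = j' then 1 else 0) * q y i) from by
          rw [← map_smul, smul_eq_mul], mul_comm]
    have hkey : ∀ ψ : (Fin k → Polynomial ℤ) →ₗ[Polynomial ℤ] Polynomial ℤ,
        Φ (j ψ) = eps n (ψ a) := by
      intro ψ
      rw [hjdec ψ, map_sum, LinearMap.pi_apply_eq_sum_univ ψ a, map_sum]
      refine Finset.sum_congr rfl fun i _ => ?_
      rw [map_smul, ← ha, ← map_smul, smul_eq_mul, smul_eq_mul, mul_comm]
    -- f a is divisible by 2^n
    have hdiv : ∀ i : Fin l, ∃ u, f a i = 2 ^ n * u := by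
      intro i
      apply eps_eq_zero
      have h1 : (LinearMap.proj i ∘ₗ f : (Fin k → Polynomial ℤ) →ₗ[Polynomial ℤ] Polynomial ℤ)
          a = f a i := rfl
      rw [← h1, ← hkey]
      have h2 : j ((LinearMap.proj i) ∘ₗ f) = 0 := by
        apply LinearMap.ext
        intro x
        obtain ⟨y, rfl⟩ := hg x
        rw [hj, LinearMap.comp_apply, hfq, LinearMap.proj_apply, Pi.smul_apply, smul_eq_mul,
          eps_two_pow, LinearMap.zero_apply]
      rw [h2, map_zero]
    choose y0 hy0 using hdiv
    have hfa : f a = (2 : Polynomial ℤ) ^ n • y0 := by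
      funext i
      rw [Pi.smul_apply, smul_eq_mul]
      exact hy0 i
    have hqy0 : q y0 = a := by
      apply smul_right_injective (Fin k → Polynomial ℤ) h2n
      show (2 : Polynomial ℤ) ^ n • q y0 = (2 : Polynomial ℤ) ^ n • a
      rw [← map_smul, ← hfa, hqf]
    refine ⟨g y0, ?_⟩
    apply LinearMap.ext
    intro φ
    obtain ⟨ψ, rfl⟩ := jsurj φ
    show (j ψ) (g y0) = Φ (j ψ)
    rw [hj, hqy0, hkey]
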